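/- Deterministic form of the SC-RR consistency theorem: consider the SBM mean structure with k = min(k1,k2), and define Ψ̄1² = min_{s≠t} Σ_{ℓ=1}^{k2} π_{2ℓ}·(Ψ_{sℓ} − Ψ_{tℓ})² and Ψ̃1² = min_{s≠t} [ π_{1t}·Σ_{ℓ=1}^{k2} π_{2ℓ}·(Ψ_{sℓ} − Ψ_{tℓ})² ]. Let A_re ∈ ℝ^{n1×n2} satisfy ‖A_re − P‖_op ≤ t for some t > 0, let M be a best rank-k approximation of A_re (i.e., rank(M) ≤ k and ‖M − A_re‖_op ≤ σ_{k+1}(A_re)), let κ ≥ 1, and assume 32·(1+κ)²·k·t² < Ψ̃1². Then every κ-approximate k-means solution X̃ ∈ KMM(n1,n2,k1) for M satisfies Mis(X̃, P) ≤ 32·(1+κ)²·k·t²/Ψ̄1², where P is regarded as an element of KMM(n1,n2,k1). -/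

import Mathlib

open Matrix

noncomputable section

/-- Frobenius norm of a real matrix. -/
def frob {m n : Type*} [Fintype m] [Fintype n] (M : Matrix m n ℝ) : ℝ :=
  Real.sqrt (∑ i, ∑ j, (M i j) ^ 2)

/-- ℓ2→ℓ2 operator norm of a real matrix: sup of ‖Mx‖₂ over the ℓ2 unit ball. -/
def opNorm {m n : Type*} [Fintype m] [Fintype n] (M : Matrix m n ℝ) : ℝ :=
  sSup {t | ∃ x : n → ℝ, ∑ j, (x j) ^ 2 ≤ 1 ∧ t = Real.sqrt (∑ i, (M.mulVec x i) ^ 2)}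

/-- `Z` is a membership matrix: 0/1 entries, exactly one 1 per row. -/
def IsMembership {n k : ℕ} (Z : Matrix (Fin n) (Fin k) ℝ) : Prop :=
  (∀ i j, Z i j = 0 ∨ Z i j = 1) ∧ ∀ i, ∃! j, Z i j = 1

/-- size of the `j`-th cluster of a membership matrix. -/
def clusterSize {n k : ℕ} (Z : Matrix (Fin n) (Fin k) ℝ) (j : Fin k) : ℕ :=
  Set.ncard {i | Z i j = 1}

/-- `X` has at most `k` distinct rows (is a k-means matrix). -/
def IsKMM {n d : ℕ} (k : ℕ) (X : Matrix (Fin n) (Fin d) ℝ) : Prop :=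
  ∃ g : Fin n → Fin k, ∀ i i', g i = g i' → X i = X i'

/-- `g` is a labeling consistent with the rows of `X` (same label iff equal rows). -/
def IsLabeling {n d k : ℕ} (X : Matrix (Fin n) (Fin d) ℝ) (g : Fin n → Fin k) : Prop :=
  ∀ i i', g i = g i' ↔ X i = X i'

/-- average misclassification rate between two k-means matrices (min over label matchings). -/
def Mis {n d d' : ℕ} (k : ℕ) (X : Matrix (Fin n) (Fin d) ℝ) (Y : Matrix (Fin n) (Fin d') ℝ) : ℝ :=
  sInf {t | ∃ g g' : Fin n → Fin k, IsLabeling X g ∧ IsLabeling Y g' ∧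
    t = (Set.ncard {i | g i ≠ g' i} : ℝ) / n}

/-- `Xtil` is a κ-approximate k-means solution for `Xhat`. -/
def IsKApprox {n d : ℕ} (k : ℕ) (κ : ℝ) (Xhat Xtil : Matrix (Fin n) (Fin d) ℝ) : Prop :=
  IsKMM k Xtil ∧ ∀ X : Matrix (Fin n) (Fin d) ℝ, IsKMM k X →
    frob (Xhat - Xtil) ≤ κ * frob (Xhat - X)

/-- `σ_{k+1}(A)` via the Eckart–Young–Mirsky characterization. -/
def svalSucc {m n : ℕ} (A : Matrix (Fin m) (Fin n) ℝ) (k : ℕ) : ℝ :=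
  sInf {t | ∃ N : Matrix (Fin m) (Fin n) ℝ, N.rank ≤ k ∧ t = opNorm (A - N)}

/-- `Ψ̄1²`: minimal π₂-weighted squared row separation of `Ψ`. -/
def PsiBarSq {k1 k2 : ℕ} (Ψ : Matrix (Fin k1) (Fin k2) ℝ) (π2 : Fin k2 → ℝ) : ℝ :=
  sInf {v | ∃ s t : Fin k1, s ≠ t ∧ v = ∑ ℓ, π2 ℓ * (Ψ s ℓ - Ψ t ℓ) ^ 2}

/-- `Ψ̃1²`: as `Ψ̄1²` but including the factor `π_{1t}`. -/
def PsiTilSq {k1 k2 : ℕ} (Ψ : Matrix (Fin k1) (Fin k2) ℝ)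
    (π1 : Fin k1 → ℝ) (π2 : Fin k2 → ℝ) : ℝ :=
  sInf {v | ∃ s t : Fin k1, s ≠ t ∧ v = π1 t * ∑ ℓ, π2 ℓ * (Ψ s ℓ - Ψ t ℓ) ^ 2}

namespace SBMAux

variable {ι : Type*} [Fintype ι]

/-- Euclidean norm of a finitely-indexed real vector. -/
def en (x : ι → ℝ) : ℝ := Real.sqrt (∑ i, x i ^ 2)

lemma en_nonneg (x : ι → ℝ) : 0 ≤ en x := Real.sqrt_nonneg _

lemma sq_en (x : ι → ℝ) : en x ^ 2 = ∑ i, x i ^ 2 :=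
  Real.sq_sqrt (Finset.sum_nonneg fun _ _ => sq_nonneg _)

lemma en_eq_norm (x : ι → ℝ) : en x = ‖(WithLp.equiv 2 (ι → ℝ)).symm x‖ := by
  rw [EuclideanSpace.norm_eq]
  unfold en
  congr 1
  exact Finset.sum_congr rfl fun i _ => by simp [Real.norm_eq_abs, sq_abs]

lemma en_add_le (x y : ι → ℝ) : en (x + y) ≤ en x + en y := by
  rw [en_eq_norm, en_eq_norm, en_eq_norm]
  rw [show (WithLp.equiv 2 (ι → ℝ)).symm (x + y)
      = (WithLp.equiv 2 (ι → ℝ)).symm x + (WithLp.equiv 2 (ι → ℝ)).symm y from rfl]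
  exact norm_add_le _ _

lemma en_neg (x : ι → ℝ) : en (-x) = en x := by
  unfold en; congr 1; refine Finset.sum_congr rfl fun i _ => ?_; simp

lemma en_sub_comm (x y : ι → ℝ) : en (x - y) = en (y - x) := by
  rw [← en_neg (x - y)]; congr 1; abel

lemma en_smul (c : ℝ) (x : ι → ℝ) : en (c • x) = |c| * en x := by
  unfold en
  have : ∑ i, (c • x) i ^ 2 = c ^ 2 * ∑ i, x i ^ 2 := by
    rw [Finset.mul_sum]; refine Finset.sum_congr rfl fun i _ => ?_; simp [mul_pow]
  rw [this, Real.sqrt_mul (sq_nonneg c), Real.sqrt_sq_eq_abs]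

lemma en_eq_zero_iff (x : ι → ℝ) : en x = 0 ↔ x = 0 := by
  constructor
  · intro h
    have h2 : ∑ i, x i ^ 2 = 0 := by
      have := sq_en x; rw [h] at this; simpa using this.symm
    funext i
    have := (Finset.sum_eq_zero_iff_of_nonneg (fun i _ => sq_nonneg (x i))).1 h2 i (by simp)
    exact pow_eq_zero_iff (by norm_num) |>.1 this
  · rintro rfl; simp [en]

lemma en_lower (a b p q : ι → ℝ) :
    en (p - q) - en (a - p) - en (b - q) ≤ en (a - b) := by
  have h : p - q = (p - a) + ((a - b) + (b - q)) := by abel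
  have := h ▸ (en_add_le (p - a) ((a - b) + (b - q)))
  have h2 := en_add_le (a - b) (b - q)
  rw [en_sub_comm p a] at this
  linarith


variable {m n : Type*} [Fintype m] [Fintype n]

lemma frob_eq_en (M : Matrix m n ℝ) : frob M = en (fun p : m × n => M p.1 p.2) := by
  unfold frob en
  congr 1
  exact (Fintype.sum_prod_type (f := fun p : m × n => M p.1 p.2 ^ 2)).symm

lemma frob_nonneg (M : Matrix m n ℝ) : 0 ≤ frob M := Real.sqrt_nonneg _

lemma sq_frob (M : Matrix m n ℝ) : frob M ^ 2 = ∑ i, ∑ j, M i j ^ 2 :=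
  Real.sq_sqrt (Finset.sum_nonneg fun _ _ => Finset.sum_nonneg fun _ _ => sq_nonneg _)

lemma frob_add_le (A B : Matrix m n ℝ) : frob (A + B) ≤ frob A + frob B := by
  rw [frob_eq_en, frob_eq_en, frob_eq_en]
  exact en_add_le _ _

lemma frob_sub_comm (A B : Matrix m n ℝ) : frob (A - B) = frob (B - A) := by
  rw [frob_eq_en, frob_eq_en]
  exact en_sub_comm (fun p : m × n => A p.1 p.2) (fun p => B p.1 p.2)

/-- the set defining opNorm -/
lemma opSet_bddAbove (M : Matrix m n ℝ) :
    BddAbove {t | ∃ x : n → ℝ, ∑ j, (x j) ^ 2 ≤ 1 ∧ t = Real.sqrt (∑ i, (M.mulVec x i) ^ 2)} := by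
  refine ⟨frob M, ?_⟩
  rintro t ⟨x, hx, rfl⟩
  have hb : ∀ i, (M.mulVec x i) ^ 2 ≤ ∑ j, M i j ^ 2 := by
    intro i
    have := Finset.sum_mul_sq_le_sq_mul_sq Finset.univ (fun j => M i j) x
    calc (M.mulVec x i) ^ 2 = (∑ j, M i j * x j) ^ 2 := by rfl
      _ ≤ (∑ j, M i j ^ 2) * ∑ j, x j ^ 2 := this
      _ ≤ (∑ j, M i j ^ 2) * 1 := by
          exact mul_le_mul_of_nonneg_left hx (Finset.sum_nonneg fun _ _ => sq_nonneg _)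
      _ = ∑ j, M i j ^ 2 := mul_one _
  exact Real.sqrt_le_sqrt (Finset.sum_le_sum fun i _ => hb i)

lemma zero_mem_opSet (M : Matrix m n ℝ) :
    (0 : ℝ) ∈ {t | ∃ x : n → ℝ, ∑ j, (x j) ^ 2 ≤ 1 ∧ t = Real.sqrt (∑ i, (M.mulVec x i) ^ 2)} := by
  refine ⟨0, by simp, ?_⟩
  simp [Matrix.mulVec_zero]

lemma opNorm_nonneg (M : Matrix m n ℝ) : 0 ≤ opNorm M :=
  le_csSup (opSet_bddAbove M) (zero_mem_opSet M)

lemma en_mulVec_le (M : Matrix m n ℝ) {x : n → ℝ} (hx : ∑ j, x j ^ 2 ≤ 1) :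
    en (M.mulVec x) ≤ opNorm M :=
  le_csSup (opSet_bddAbove M) ⟨x, hx, rfl⟩

lemma en_mulVec_le' (M : Matrix m n ℝ) (x : n → ℝ) :
    en (M.mulVec x) ≤ opNorm M * en x := by
  rcases eq_or_ne (en x) 0 with h | h
  · have hx : x = 0 := (en_eq_zero_iff x).1 h
    subst hx
    rw [Matrix.mulVec_zero, (en_eq_zero_iff (0 : m → ℝ)).2 rfl, (en_eq_zero_iff (0 : n → ℝ)).2 rfl, mul_zero]
  · have hpos : 0 < en x := lt_of_le_of_ne (en_nonneg x) (Ne.symm h)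
    set y := (en x)⁻¹ • x with hy
    have hsum : ∑ j, y j ^ 2 ≤ 1 := by
      have : en y = 1 := by
        rw [hy, en_smul, abs_of_nonneg (inv_nonneg.2 hpos.le), inv_mul_cancel₀ h]
      have := sq_en y
      rw [‹en y = 1›] at this
      simpa using this.symm.le
    have h1 : en (M.mulVec y) ≤ opNorm M := en_mulVec_le M hsum
    have h2 : M.mulVec y = (en x)⁻¹ • M.mulVec x := by
      rw [hy, Matrix.mulVec_smul]
    rw [h2, en_smul, abs_of_nonneg (inv_nonneg.2 hpos.le)] at h1
    calc en (M.mulVec x) = en x * ((en x)⁻¹ * en (M.mulVec x)) := by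
          field_simp
      _ ≤ en x * opNorm M := mul_le_mul_of_nonneg_left h1 hpos.le
      _ = opNorm M * en x := mul_comm _ _

lemma opNorm_le (M : Matrix m n ℝ) {c : ℝ}
    (h : ∀ x : n → ℝ, ∑ j, x j ^ 2 ≤ 1 → en (M.mulVec x) ≤ c) : opNorm M ≤ c := by
  refine csSup_le ⟨0, zero_mem_opSet M⟩ ?_
  rintro t ⟨x, hx, rfl⟩
  exact h x hx

lemma opNorm_add_le (A B : Matrix m n ℝ) : opNorm (A + B) ≤ opNorm A + opNorm B := by
  refine opNorm_le _ fun x hx => ?_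
  have : (A + B).mulVec x = A.mulVec x + B.mulVec x := Matrix.add_mulVec A B x
  rw [this]
  exact (en_add_le _ _).trans (add_le_add (en_mulVec_le A hx) (en_mulVec_le B hx))


section Spectral
variable {m n : Type*} [Fintype m] [Fintype n] [DecidableEq n]

lemma trace_eq_sum_eigenvalues (G : Matrix n n ℝ) (hG : G.IsHermitian) :
    G.trace = ∑ i, hG.eigenvalues i := by
  have := hG.trace_eq_sum_eigenvalues
  simpa using this

lemma eigenvalue_le_sq_opNorm (A : Matrix m n ℝ)
    (hG : (Aᵀ * A).IsHermitian) (i : n) :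
    hG.eigenvalues i ≤ opNorm A ^ 2 := by
  set v : n → ℝ := ⇑(hG.eigenvectorBasis i) with hv
  have hunit : ∑ j, v j ^ 2 = 1 := by
    have hn : ‖hG.eigenvectorBasis i‖ = 1 := hG.eigenvectorBasis.orthonormal.1 i
    have : en v = 1 := by
      rw [en_eq_norm]
      convert hn
      rfl
    have := sq_en v
    rw [‹en v = 1›] at this
    simpa using this.symm
  have heig : (Aᵀ * A) *ᵥ v = hG.eigenvalues i • v := hG.mulVec_eigenvectorBasis i
  have hdot : v ⬝ᵥ ((Aᵀ * A) *ᵥ v) = hG.eigenvalues i := by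
    rw [heig, dotProduct_smul]
    have : v ⬝ᵥ v = ∑ j, v j ^ 2 := by
      unfold dotProduct
      exact Finset.sum_congr rfl fun j _ => (sq (v j)).symm
    rw [smul_eq_mul, this, hunit, mul_one]
  have hdot2 : v ⬝ᵥ ((Aᵀ * A) *ᵥ v) = ∑ j, (A *ᵥ v) j ^ 2 := by
    rw [← Matrix.mulVec_mulVec, Matrix.dotProduct_mulVec, Matrix.vecMul_transpose]
    unfold dotProduct
    exact Finset.sum_congr rfl fun j _ => (sq ((A *ᵥ v) j)).symm
  have hb : en (A *ᵥ v) ≤ opNorm A := en_mulVec_le A hunit.le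
  have := pow_le_pow_left₀ (en_nonneg _) hb 2
  rw [sq_en] at this
  rw [← hdot, hdot2]
  exact this

lemma sq_frob_le_rank_mul_sq_opNorm (A : Matrix m n ℝ) :
    frob A ^ 2 ≤ (A.rank : ℝ) * opNorm A ^ 2 := by
  classical
  have hG : (Aᵀ * A).IsHermitian := by
    have := Matrix.isHermitian_conjTranspose_mul_self A
    rwa [Matrix.conjTranspose_eq_transpose_of_trivial] at this
  have hfrob : frob A ^ 2 = ∑ i, hG.eigenvalues i := by
    rw [sq_frob, ← trace_eq_sum_eigenvalues _ hG]
    unfold Matrix.trace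
    rw [Finset.sum_comm]
    refine Finset.sum_congr rfl fun j _ => ?_
    unfold Matrix.diag
    rw [Matrix.mul_apply]
    exact Finset.sum_congr rfl fun i _ => by rw [Matrix.transpose_apply, sq]
  have hpsd : (Aᵀ * A).PosSemidef := by
    have := Matrix.posSemidef_conjTranspose_mul_self A
    rwa [Matrix.conjTranspose_eq_transpose_of_trivial] at this
  have hnonneg : ∀ i, 0 ≤ hG.eigenvalues i := fun i => hpsd.eigenvalues_nonneg i
  have hle : ∀ i, hG.eigenvalues i ≤ opNorm A ^ 2 := eigenvalue_le_sq_opNorm A hG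
  have hcard : (Aᵀ * A).rank = Fintype.card {i // hG.eigenvalues i ≠ 0} :=
    hG.rank_eq_card_non_zero_eigs
  have hrank : (Aᵀ * A).rank = A.rank := Matrix.rank_transpose_mul_self A
  have hsum : ∑ i, hG.eigenvalues i ≤ (A.rank : ℝ) * opNorm A ^ 2 := by
    have hfilt : ∑ i, hG.eigenvalues i
        = ∑ i ∈ Finset.univ.filter (fun i => hG.eigenvalues i ≠ 0), hG.eigenvalues i := by
      refine (Finset.sum_filter_of_ne fun i _ h => ?_).symm
      exact h
    rw [hfilt]
    have hcard2  : (Finset.univ.filter (fun i => hG.eigenvalues i ≠ 0)).card = A.rank := by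
      rw [← hrank, hcard]
      rw [Fintype.card_subtype]
    calc ∑ i ∈ Finset.univ.filter (fun i => hG.eigenvalues i ≠ 0), hG.eigenvalues i
        ≤ ∑ _i ∈ Finset.univ.filter (fun i => hG.eigenvalues i ≠ 0), opNorm A ^ 2 :=
          Finset.sum_le_sum fun i _ => hle i
      _ = ((Finset.univ.filter (fun i => hG.eigenvalues i ≠ 0)).card : ℝ) * opNorm A ^ 2 := by
          rw [Finset.sum_const, nsmul_eq_mul]
      _ = (A.rank : ℝ) * opNorm A ^ 2 := by rw [hcard2]
  rw [hfrob]
  exact hsum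

lemma rank_sub_le (A B : Matrix m n ℝ) : (A - B).rank ≤ A.rank + B.rank := by
  classical
  unfold Matrix.rank
  have hr : LinearMap.range (A - B).mulVecLin ≤
      LinearMap.range A.mulVecLin ⊔ LinearMap.range B.mulVecLin := by
    rintro y ⟨x, rfl⟩
    have : (A - B).mulVecLin x = A.mulVecLin x - B.mulVecLin x := by
      simp [Matrix.mulVecLin, Matrix.sub_mulVec]
    rw [this]
    exact Submodule.sub_mem _ (Submodule.mem_sup_left ⟨x, rfl⟩)
      (Submodule.mem_sup_right ⟨x, rfl⟩)
  calc Module.finrank ℝ (LinearMap.range (A - B).mulVecLin)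
      ≤ Module.finrank ℝ ((LinearMap.range A.mulVecLin) ⊔ (LinearMap.range B.mulVecLin) :
        Submodule ℝ (m → ℝ)) := Submodule.finrank_mono hr
    _ ≤ _ := Submodule.finrank_add_le_finrank_add_finrank _ _

end Spectral

end SBMAux


open SBMAux in
set_option maxHeartbeats 800000 in
/-- Theorem 5.2 (deterministic form of the SC-RR consistency theorem). -/
theorem stmt13 (n1 n2 k1 k2 : ℕ)
    (Z1 : Matrix (Fin n1) (Fin k1) ℝ) (Z2 : Matrix (Fin n2) (Fin k2) ℝ)
    (hZ1 : IsMembership Z1) (hZ2 : IsMembership Z2)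
    (hpos1 : ∀ j, 0 < clusterSize Z1 j) (hpos2 : ∀ j, 0 < clusterSize Z2 j)
    (Ψ : Matrix (Fin k1) (Fin k2) ℝ)
    (P : Matrix (Fin n1) (Fin n2) ℝ)
    (hP : P = Z1 * ((Real.sqrt ((n1 : ℝ) * n2))⁻¹ • Ψ) * Z2ᵀ)
    (t : ℝ) (ht : 0 < t)
    (Are : Matrix (Fin n1) (Fin n2) ℝ) (hcon : opNorm (Are - P) ≤ t)
    (M : Matrix (Fin n1) (Fin n2) ℝ)
    (hMrank : M.rank ≤ min k1 k2)
    (hMbest : opNorm (M - Are) ≤ svalSucc Are (min k1 k2))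
    (κ : ℝ) (hκ : 1 ≤ κ)
    (hcond : 32 * (1 + κ) ^ 2 * (min k1 k2) * t ^ 2 <
      PsiTilSq Ψ (fun s => (clusterSize Z1 s : ℝ) / n1)
        (fun ℓ => (clusterSize Z2 ℓ : ℝ) / n2)) :
    ∀ Xt : Matrix (Fin n1) (Fin n2) ℝ, IsKApprox k1 κ M Xt →
      Mis k1 Xt P ≤ 32 * (1 + κ) ^ 2 * (min k1 k2) * t ^ 2 /
        PsiBarSq Ψ (fun ℓ => (clusterSize Z2 ℓ : ℝ) / n2) := by
  classical
  intro Xt hXt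
  set k := min k1 k2 with hkdef
  set c0 : ℝ := (Real.sqrt ((n1 : ℝ) * n2))⁻¹ with hc0
  set π1 : Fin k1 → ℝ := fun s => (clusterSize Z1 s : ℝ) / n1 with hπ1
  set π2 : Fin k2 → ℝ := fun ℓ => (clusterSize Z2 ℓ : ℝ) / n2 with hπ2
  set sep : Fin k1 → Fin k1 → ℝ := fun s t' => ∑ ℓ, π2 ℓ * (Ψ s ℓ - Ψ t' ℓ) ^ 2 with hsepdef
  -- labels
  obtain ⟨g1, hg1, hg1u⟩ : ∃ g : Fin n1 → Fin k1, (∀ i, Z1 i (g i) = 1) ∧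
      ∀ i j, Z1 i j = 1 → j = g i := by
    choose g hg using fun i => hZ1.2 i
    exact ⟨g, fun i => (hg i).1, fun i j h => (hg i).2 j h⟩
  have hg1z : ∀ i j, j ≠ g1 i → Z1 i j = 0 := fun i j h =>
    (hZ1.1 i j).resolve_right fun h1 => h (hg1u i j h1)
  obtain ⟨g2, hg2, hg2u⟩ : ∃ g : Fin n2 → Fin k2, (∀ i, Z2 i (g i) = 1) ∧
      ∀ i j, Z2 i j = 1 → j = g i := by
    choose g hg using fun i => hZ2.2 i
    exact ⟨g, fun i => (hg i).1, fun i j h => (hg i).2 j h⟩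
  have hg2z : ∀ i j, j ≠ g2 i → Z2 i j = 0 := fun i j h =>
    (hZ2.1 i j).resolve_right fun h1 => h (hg2u i j h1)
  -- basic positivity facts
  have hLHS0 : (0:ℝ) ≤ 32 * (1 + κ) ^ 2 * k * t ^ 2 := by positivity
  have hTpos : 0 < PsiTilSq Ψ π1 π2 := lt_of_le_of_lt hLHS0 hcond
  have hπ1nonneg : ∀ s, 0 ≤ π1 s := fun s => by rw [hπ1]; positivity
  have hπ2nonneg : ∀ ℓ, 0 ≤ π2 ℓ := fun ℓ => by rw [hπ2]; positivity
  have hsepnonneg : ∀ s t', 0 ≤ sep s t' := fun s t' =>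
    Finset.sum_nonneg fun ℓ _ => mul_nonneg (hπ2nonneg ℓ) (sq_nonneg _)
  have hbddT : BddBelow {v | ∃ s t' : Fin k1, s ≠ t' ∧
      v = π1 t' * ∑ ℓ, π2 ℓ * (Ψ s ℓ - Ψ t' ℓ) ^ 2} := by
    refine ⟨0, ?_⟩
    rintro v ⟨s, t', hst, rfl⟩
    exact mul_nonneg (hπ1nonneg t') (hsepnonneg s t')
  have hTle : ∀ s t', s ≠ t' → PsiTilSq Ψ π1 π2 ≤ π1 t' * sep s t' := fun s t' h =>
    csInf_le hbddT ⟨s, t', h, rfl⟩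
  have hpair : ∃ s t' : Fin k1, s ≠ t' := by
    by_contra h
    push_neg at h
    have he : {v | ∃ s t' : Fin k1, s ≠ t' ∧
        v = π1 t' * ∑ ℓ, π2 ℓ * (Ψ s ℓ - Ψ t' ℓ) ^ 2} = ∅ := by
      ext v
      simp only [Set.mem_setOf_eq, Set.mem_empty_iff_false, iff_false]
      rintro ⟨s, t', hst, -⟩
      exact hst (h s t')
    have hz : PsiTilSq Ψ π1 π2 = 0 := by unfold PsiTilSq; rw [he, Real.sInf_empty]
    linarith
  have hsep_pos : ∀ s t', s ≠ t' → 0 < sep s t' := by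
    intro s t' h
    have h1 := hTle s t' h
    by_contra hnp
    push_neg at hnp
    have h2 : π1 t' * sep s t' ≤ 0 := mul_nonpos_of_nonneg_of_nonpos (hπ1nonneg t') hnp
    linarith
  have hsep_symm : ∀ s t', sep s t' = sep t' s := fun s t' =>
    Finset.sum_congr rfl fun ℓ _ => by ring
  have hn1 : 0 < n1 := by
    obtain ⟨s, t', hst⟩ := hpair
    have h := hpos1 s
    unfold clusterSize at h
    obtain ⟨i, -⟩ := (Set.ncard_pos (Set.toFinite _)).1 h
    exact i.pos
  have hn1R : (0:ℝ) < n1 := by exact_mod_cast hn1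
  have hn2 : 0 < n2 := by
    have hk2 : 0 < k2 := by
      rcases Nat.eq_zero_or_pos k2 with h | h
      · obtain ⟨s, t', hst⟩ := hpair
        have h1 := hsep_pos s t' hst
        have h2 : sep s t' = 0 := by
          simp only [hsepdef]
          subst h
          exact Finset.sum_of_isEmpty _
        linarith
      · exact h
    have h := hpos2 ⟨0, hk2⟩
    unfold clusterSize at h
    obtain ⟨j, -⟩ := (Set.ncard_pos (Set.toFinite _)).1 h
    exact j.pos
  have hn2R : (0:ℝ) < n2 := by exact_mod_cast hn2
  have hc0sq : c0 ^ 2 = ((n1:ℝ) * n2)⁻¹ := by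
    rw [hc0, inv_pow, Real.sq_sqrt (by positivity)]
  -- entries of P
  have hPe : ∀ i j, P i j = c0 * Ψ (g1 i) (g2 j) := by
    intro i j
    rw [hP, Matrix.mul_apply]
    have hb : ∀ b, (Z1 * (c0 • Ψ)) i b = c0 * Ψ (g1 i) b := by
      intro b
      rw [Matrix.mul_apply, Finset.sum_eq_single (g1 i)]
      · rw [hg1 i, one_mul, Matrix.smul_apply, smul_eq_mul]
      · intro a _ ha
        rw [hg1z i a ha, zero_mul]
      · intro h; exact absurd (Finset.mem_univ _) h
    rw [Finset.sum_eq_single (g2 j)]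
    · rw [hb, Matrix.transpose_apply, hg2 j, mul_one]
    · intro b _ hbne
      rw [Matrix.transpose_apply, hg2z j b hbne, mul_zero]
    · intro h; exact absurd (Finset.mem_univ _) h
  -- cluster sizes as fiber cardinalities
  have hcs1 : ∀ c, clusterSize Z1 c = (Finset.univ.filter fun i => g1 i = c).card := by
    intro c
    unfold clusterSize
    rw [show {i | Z1 i c = 1} = ↑(Finset.univ.filter fun i => g1 i = c) by
      ext i
      simp only [Set.mem_setOf_eq, Finset.coe_filter, Finset.mem_univ, true_and]
      constructor
      · intro h; exact (hg1u i c h).symm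
      · rintro rfl; exact hg1 i]
    exact Set.ncard_coe_finset _
  have hcs2 : ∀ c, clusterSize Z2 c = (Finset.univ.filter fun j => g2 j = c).card := by
    intro c
    unfold clusterSize
    rw [show {j | Z2 j c = 1} = ↑(Finset.univ.filter fun j => g2 j = c) by
      ext j
      simp only [Set.mem_setOf_eq, Finset.coe_filter, Finset.mem_univ, true_and]
      constructor
      · intro h; exact (hg2u j c h).symm
      · rintro rfl; exact hg2 j]
    exact Set.ncard_coe_finset _
  have hπ1le1 : ∀ c, π1 c ≤ 1 := by
    intro c
    rw [hπ1]
    simp only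
    rw [div_le_one hn1R]
    have hle : (Finset.univ.filter fun i => g1 i = c).card ≤ n1 := by
      calc (Finset.univ.filter fun i => g1 i = c).card
          ≤ (Finset.univ : Finset (Fin n1)).card := Finset.card_filter_le _ _
        _ = n1 := by simp
    rw [hcs1 c]
    exact_mod_cast hle
  -- row distances of P
  have hrowdist : ∀ s t' : Fin k1,
      (∑ j, (c0 * Ψ s (g2 j) - c0 * Ψ t' (g2 j)) ^ 2) = sep s t' / n1 := by
    intro s t'
    have h1 : ∀ j : Fin n2, (c0 * Ψ s (g2 j) - c0 * Ψ t' (g2 j)) ^ 2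
        = c0 ^ 2 * (Ψ s (g2 j) - Ψ t' (g2 j)) ^ 2 := fun j => by ring
    rw [Finset.sum_congr rfl fun j _ => h1 j, ← Finset.mul_sum]
    have h2 : (∑ j, (Ψ s (g2 j) - Ψ t' (g2 j)) ^ 2)
        = ∑ ℓ, ((Finset.univ.filter fun j => g2 j = ℓ).card : ℝ) * (Ψ s ℓ - Ψ t' ℓ) ^ 2 := by
      rw [← Finset.sum_fiberwise Finset.univ g2 (fun j => (Ψ s (g2 j) - Ψ t' (g2 j)) ^ 2)]
      refine Finset.sum_congr rfl fun ℓ _ => ?_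
      rw [Finset.sum_congr rfl (fun j hj => by rw [(Finset.mem_filter.1 hj).2]),
        Finset.sum_const, nsmul_eq_mul]
    rw [h2, hc0sq]
    simp only [hsepdef, hπ2]
    rw [Finset.sum_div, Finset.mul_sum]
    refine Finset.sum_congr rfl fun ℓ _ => ?_
    rw [hcs2 ℓ]
    rw [inv_mul_eq_div, div_mul_eq_mul_div, div_div, mul_comm (n2:ℝ) (n1:ℝ)]
  -- dsq : minimal separation from cluster c
  have hFne : ∀ c : Fin k1,
      ((Finset.univ.filter fun s => s ≠ c).image fun s => sep s c).Nonempty := by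
    intro c
    obtain ⟨a, b, hab⟩ := hpair
    refine ⟨sep (if a = c then b else a) c, Finset.mem_image_of_mem _ ?_⟩
    simp only [Finset.mem_filter, Finset.mem_univ, true_and]
    split_ifs with h
    · intro hb; exact hab (by rw [h, hb])
    · exact h
  set dsq : Fin k1 → ℝ := fun c =>
    ((Finset.univ.filter fun s => s ≠ c).image fun s => sep s c).min' (hFne c) with hdsqdef
  have hdsq_le : ∀ c s, s ≠ c → dsq c ≤ sep s c := by
    intro c s hs
    simp only [hdsqdef]
    exact Finset.min'_le _ _ (Finset.mem_image_of_mem _ (by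
      simp only [Finset.mem_filter, Finset.mem_univ, true_and]; exact hs))
  have hdsq_ex : ∀ c, ∃ s, s ≠ c ∧ sep s c = dsq c := by
    intro c
    have hm := Finset.min'_mem _ (hFne c)
    rw [Finset.mem_image] at hm
    obtain ⟨s, hs, hval⟩ := hm
    simp only [Finset.mem_filter, Finset.mem_univ, true_and] at hs
    exact ⟨s, hs, by simp only [hdsqdef]; exact hval⟩
  have hT_le_dsq : ∀ c, PsiTilSq Ψ π1 π2 ≤ π1 c * dsq c := by
    intro c
    obtain ⟨s, hs, hval⟩ := hdsq_ex c
    rw [← hval]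
    exact hTle s c hs
  -- PsiBar facts
  have hbddB : BddBelow {v | ∃ s t' : Fin k1, s ≠ t' ∧
      v = ∑ ℓ, π2 ℓ * (Ψ s ℓ - Ψ t' ℓ) ^ 2} := by
    refine ⟨0, ?_⟩
    rintro v ⟨s, t', hst, rfl⟩
    exact hsepnonneg s t'
  have hBle : ∀ s t', s ≠ t' → PsiBarSq Ψ π2 ≤ sep s t' := fun s t' h =>
    csInf_le hbddB ⟨s, t', h, rfl⟩
  have hTB : PsiTilSq Ψ π1 π2 ≤ PsiBarSq Ψ π2 := by
    unfold PsiBarSq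
    obtain ⟨a, b, hab⟩ := hpair
    refine le_csInf ⟨_, ⟨a, b, hab, rfl⟩⟩ ?_
    rintro v ⟨s, t', hst, rfl⟩
    calc PsiTilSq Ψ π1 π2 ≤ π1 t' * sep s t' := hTle s t' hst
      _ ≤ 1 * sep s t' := mul_le_mul_of_nonneg_right (hπ1le1 t') (hsepnonneg s t')
      _ = sep s t' := one_mul _
  have hBpos : 0 < PsiBarSq Ψ π2 := lt_of_lt_of_le hTpos hTB
  have hB_le_dsq : ∀ c, PsiBarSq Ψ π2 ≤ dsq c := by
    intro c
    obtain ⟨s, hs, hval⟩ := hdsq_ex c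
    rw [← hval]
    exact hBle s c hs
  have hdsq_pos : ∀ c, 0 < dsq c := fun c => lt_of_lt_of_le hBpos (hB_le_dsq c)
  -- Frobenius chain
  have hrankP : P.rank ≤ k := by
    rw [hP]
    refine le_trans (Matrix.rank_mul_le_left _ _) ?_
    refine le_trans (Matrix.rank_mul_le_right _ _) ?_
    exact le_min (Matrix.rank_le_height _) (Matrix.rank_le_width _)
  have hsval : svalSucc Are k ≤ t := by
    have hbdd : BddBelow {v | ∃ N : Matrix (Fin n1) (Fin n2) ℝ, N.rank ≤ k ∧
        v = opNorm (Are - N)} := by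
      refine ⟨0, ?_⟩
      rintro v ⟨N, -, rfl⟩
      exact opNorm_nonneg _
    exact le_trans (csInf_le hbdd ⟨P, hrankP, rfl⟩) hcon
  have hopMP : opNorm (M - P) ≤ 2 * t := by
    have h1 : M - P = (M - Are) + (Are - P) := (sub_add_sub_cancel _ _ _).symm
    rw [h1]
    calc opNorm ((M - Are) + (Are - P)) ≤ opNorm (M - Are) + opNorm (Are - P) :=
          opNorm_add_le _ _
      _ ≤ t + t := add_le_add (hMbest.trans hsval) hcon
      _ = 2 * t := by ring
  have hrk : ((M - P).rank : ℝ) ≤ 2 * k := by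
    have h1 : (M - P).rank ≤ k + k := le_trans (rank_sub_le M P) (add_le_add hMrank hrankP)
    calc ((M - P).rank : ℝ) ≤ ((k + k : ℕ) : ℝ) := by exact_mod_cast h1
      _ = 2 * k := by push_cast; ring
  have hfMP : frob (M - P) ^ 2 ≤ 2 * k * (2 * t) ^ 2 := by
    calc frob (M - P) ^ 2 ≤ ((M - P).rank : ℝ) * opNorm (M - P) ^ 2 :=
          sq_frob_le_rank_mul_sq_opNorm _
      _ ≤ (2 * k) * (2 * t) ^ 2 :=
          mul_le_mul hrk (pow_le_pow_left₀ (opNorm_nonneg _) hopMP 2)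
            (sq_nonneg _) (by positivity)
  have hPK : IsKMM k1 P := ⟨g1, fun i i' h => funext fun j => by rw [hPe i j, hPe i' j, h]⟩
  have hXtP : frob (Xt - P) ≤ (1 + κ) * frob (M - P) := by
    have h1 : Xt - P = (Xt - M) + (M - P) := (sub_add_sub_cancel _ _ _).symm
    calc frob (Xt - P) ≤ frob (Xt - M) + frob (M - P) := by rw [h1]; exact frob_add_le _ _
      _ = frob (M - Xt) + frob (M - P) := by rw [frob_sub_comm]
      _ ≤ κ * frob (M - P) + frob (M - P) := add_le_add_left (hXt.2 P hPK) _
      _ = (1 + κ) * frob (M - P) := by ring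
  have hF2 : frob (Xt - P) ^ 2 ≤ 8 * (1 + κ) ^ 2 * k * t ^ 2 := by
    calc frob (Xt - P) ^ 2 ≤ ((1 + κ) * frob (M - P)) ^ 2 :=
          pow_le_pow_left₀ (frob_nonneg _) hXtP 2
      _ = (1 + κ) ^ 2 * frob (M - P) ^ 2 := by ring
      _ ≤ (1 + κ) ^ 2 * (2 * k * (2 * t) ^ 2) :=
          mul_le_mul_of_nonneg_left hfMP (by positivity)
      _ = 8 * (1 + κ) ^ 2 * k * t ^ 2 := by ring
  -- misfit sets
  set err : Fin n1 → ℝ := fun i => ∑ j, (Xt i j - P i j) ^ 2 with herrdef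
  have herr_nonneg : ∀ i, 0 ≤ err i := fun i =>
    Finset.sum_nonneg fun j _ => sq_nonneg _
  have hsum_err : ∑ i, err i = frob (Xt - P) ^ 2 := by
    rw [sq_frob]
    refine Finset.sum_congr rfl fun i _ => Finset.sum_congr rfl fun j _ => ?_
    rw [Matrix.sub_apply]
  set τ : Fin k1 → ℝ := fun c => dsq c / (4 * n1) with hτdef
  have hτpos : ∀ c, 0 < τ c := fun c => div_pos (hdsq_pos c) (by positivity)
  set Sc : Fin k1 → Finset (Fin n1) :=
    fun c => Finset.univ.filter (fun i => g1 i = c ∧ τ c ≤ err i) with hScdef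
  have hSsub : ∀ c, Sc c ⊆ Finset.univ.filter (fun i => g1 i = c) := by
    intro c i hi
    simp only [hScdef, Finset.mem_filter, Finset.mem_univ, true_and] at hi ⊢
    exact hi.1
  have hcardτ : ∀ c, ((Sc c).card : ℝ) * τ c
      ≤ ∑ i ∈ Finset.univ.filter (fun i => g1 i = c), err i := by
    intro c
    calc ((Sc c).card : ℝ) * τ c = ∑ _i ∈ Sc c, τ c := by
          rw [Finset.sum_const, nsmul_eq_mul]
      _ ≤ ∑ i ∈ Sc c, err i := Finset.sum_le_sum fun i hi => by
          simp only [hScdef, Finset.mem_filter, Finset.mem_univ, true_and] at hi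
          exact hi.2
      _ ≤ ∑ i ∈ Finset.univ.filter (fun i => g1 i = c), err i :=
          Finset.sum_le_sum_of_subset_of_nonneg (hSsub c) fun i _ _ => herr_nonneg i
  have htotal : ∑ c, ((Sc c).card : ℝ) * τ c ≤ 8 * (1 + κ) ^ 2 * k * t ^ 2 := by
    refine le_trans (Finset.sum_le_sum fun c _ => hcardτ c) ?_
    rw [Finset.sum_fiberwise Finset.univ g1 err, hsum_err]
    exact hF2
  have hcard_lt : ∀ c, (Sc c).card < (Finset.univ.filter (fun i => g1 i = c)).card := by
    intro c
    have h1 : ((Sc c).card : ℝ) * τ c ≤ 8 * (1 + κ) ^ 2 * k * t ^ 2 := by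
      refine le_trans ?_ htotal
      exact Finset.single_le_sum (f := fun c => ((Sc c).card : ℝ) * τ c)
        (fun c _ => mul_nonneg (Nat.cast_nonneg _) (hτpos c).le) (Finset.mem_univ c)
    have h2 : ((Sc c).card : ℝ) * dsq c ≤ (n1 : ℝ) * (32 * (1 + κ) ^ 2 * k * t ^ 2) := by
      have h3 := mul_le_mul_of_nonneg_left h1 (by positivity : (0:ℝ) ≤ 4 * n1)
      have h4 : ((Sc c).card : ℝ) * dsq c = 4 * n1 * (((Sc c).card : ℝ) * τ c) := by
        simp only [hτdef]
        rw [mul_div_assoc', mul_div_assoc', mul_div_cancel_left₀ _ (by positivity : (4 * (n1:ℝ)) ≠ 0)]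
      rw [h4]
      calc 4 * (n1:ℝ) * (((Sc c).card : ℝ) * τ c)
          ≤ 4 * n1 * (8 * (1 + κ) ^ 2 * k * t ^ 2) := h3
        _ = (n1 : ℝ) * (32 * (1 + κ) ^ 2 * k * t ^ 2) := by ring
    have h5 : (n1 : ℝ) * (32 * (1 + κ) ^ 2 * k * t ^ 2) < (n1 : ℝ) * (π1 c * dsq c) :=
      mul_lt_mul_of_pos_left (lt_of_lt_of_le hcond (hT_le_dsq c)) hn1R
    have h6 : (n1 : ℝ) * (π1 c * dsq c) = (clusterSize Z1 c : ℝ) * dsq c := by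
      rw [hπ1]
      simp only
      rw [← mul_assoc, mul_div_assoc', mul_div_cancel_left₀ _ hn1R.ne']
    have h8 : ((Sc c).card : ℝ) < (clusterSize Z1 c : ℝ) :=
      lt_of_mul_lt_mul_right (by linarith) (hdsq_pos c).le
    rw [hcs1 c] at h8
    exact_mod_cast h8
  have hex : ∀ c, ∃ i, g1 i = c ∧ i ∉ Sc c := by
    intro c
    by_contra h
    push_neg at h
    have hsub : Finset.univ.filter (fun i => g1 i = c) ⊆ Sc c := fun i hi =>
      h i (Finset.mem_filter.1 hi).2
    exact absurd (Finset.card_le_card hsub) (not_le.2 (hcard_lt c))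
  choose ic hic1 hic2 using hex
  have hic3 : ∀ c, err (ic c) < τ c := by
    intro c
    have h := hic2 c
    simp only [hScdef, Finset.mem_filter, Finset.mem_univ, true_and, not_and, not_le] at h
    exact h (hic1 c)
  -- geometric separation
  have hPen : ∀ i i', en (P i - P i') = Real.sqrt (sep (g1 i) (g1 i') / n1) := by
    intro i i'
    unfold en
    congr 1
    rw [← hrowdist (g1 i) (g1 i')]
    refine Finset.sum_congr rfl fun j _ => ?_
    rw [Pi.sub_apply, hPe i j, hPe i' j]
  have herr_en : ∀ i, en (Xt i - P i) = Real.sqrt (err i) := by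
    intro i
    unfold en
    simp only [herrdef]
    congr 1
  have hsqrt4 : ∀ y : ℝ, Real.sqrt (y / 4) = Real.sqrt y / 2 := by
    intro y
    rw [show y / 4 = (1/2) ^ 2 * y by ring, Real.sqrt_mul (sq_nonneg _),
      Real.sqrt_sq (by norm_num : (0:ℝ) ≤ 1/2)]
    ring
  have hτhalf : ∀ (c c' : Fin k1), c' ≠ c → Real.sqrt (τ c) ≤ Real.sqrt (sep c c' / n1) / 2 := by
    intro c c' hne
    have h2 : dsq c ≤ sep c c' := by
      rw [hsep_symm]
      exact hdsq_le c c' hne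
    have h1 : τ c ≤ sep c c' / n1 / 4 := by
      simp only [hτdef]
      calc dsq c / (4 * n1) ≤ sep c c' / (4 * n1) := by gcongr
        _ = sep c c' / n1 / 4 := by ring
    calc Real.sqrt (τ c) ≤ Real.sqrt (sep c c' / n1 / 4) := Real.sqrt_le_sqrt h1
      _ = Real.sqrt (sep c c' / n1) / 2 := hsqrt4 _
  have hrows : ∀ i i', g1 i ≠ g1 i' → err i < τ (g1 i) → err i' < τ (g1 i') →
      Xt i ≠ Xt i' := by
    intro i i' hne h1 h2 heq
    have hzero : en (Xt i - Xt i') = 0 := by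
      rw [show Xt i - Xt i' = 0 by rw [heq]; exact sub_self _]
      exact (en_eq_zero_iff _).2 rfl
    have hlow := en_lower (Xt i) (Xt i') (P i) (P i')
    rw [hPen i i', herr_en i, herr_en i', hzero] at hlow
    have ha : Real.sqrt (err i) < Real.sqrt (τ (g1 i)) := Real.sqrt_lt_sqrt (herr_nonneg i) h1
    have hb : Real.sqrt (err i') < Real.sqrt (τ (g1 i')) := Real.sqrt_lt_sqrt (herr_nonneg i') h2
    have hc : Real.sqrt (τ (g1 i)) ≤ Real.sqrt (sep (g1 i) (g1 i') / n1) / 2 :=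
      hτhalf _ _ (Ne.symm hne)
    have hd : Real.sqrt (τ (g1 i')) ≤ Real.sqrt (sep (g1 i') (g1 i) / n1) / 2 :=
      hτhalf _ _ hne
    rw [hsep_symm (g1 i') (g1 i)] at hd
    linarith
  obtain ⟨gX, hgX⟩ := hXt.1
  set σ : Fin k1 → Fin k1 := fun c => gX (ic c) with hσdef
  have hσinj : Function.Injective σ := by
    intro c c' h
    by_contra hne
    refine hrows (ic c) (ic c') ?_ ?_ ?_ (hgX _ _ h)
    · rw [hic1 c, hic1 c']; exact hne
    · rw [hic1 c]; exact hic3 c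
    · rw [hic1 c']; exact hic3 c'
  have hσsurj : Function.Surjective σ := Finite.injective_iff_surjective.1 hσinj
  have hgood : ∀ i, err i < τ (g1 i) → gX i = σ (g1 i) := by
    intro i hi
    obtain ⟨c, hc⟩ := hσsurj (gX i)
    have hXeq : Xt (ic c) = Xt i := hgX _ _ hc
    by_cases h : c = g1 i
    · rw [← hc, h]
    · exfalso
      have hne : g1 i ≠ g1 (ic c) := by rw [hic1 c]; exact fun hh => h hh.symm
      exact hrows i (ic c) hne hi (by rw [hic1 c]; exact hic3 c) hXeq.symm
  have hlabX : IsLabeling Xt gX := by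
    intro i i'
    constructor
    · exact hgX i i'
    · intro hrow
      obtain ⟨c, hc⟩ := hσsurj (gX i)
      obtain ⟨c', hc'⟩ := hσsurj (gX i')
      have h1 : Xt (ic c) = Xt i := hgX _ _ hc
      have h2 : Xt (ic c') = Xt i' := hgX _ _ hc'
      have hcc : c = c' := by
        by_contra hne
        refine hrows (ic c) (ic c') ?_ ?_ ?_ (h1.trans (hrow.trans h2.symm))
        · rw [hic1 c, hic1 c']; exact hne
        · rw [hic1 c]; exact hic3 c
        · rw [hic1 c']; exact hic3 c'
      rw [← hc, ← hc', hcc]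
  have hlabP : IsLabeling P (σ ∘ g1) := by
    intro i i'
    constructor
    · intro h
      have hgg : g1 i = g1 i' := hσinj h
      exact funext fun j => by rw [hPe i j, hPe i' j, hgg]
    · intro h
      by_contra hne
      have hgne : g1 i ≠ g1 i' := fun hh => hne (by simp only [Function.comp_apply, hh])
      have hz : en (P i - P i') = 0 := by
        rw [show P i - P i' = 0 by rw [h]; exact sub_self _]
        exact (en_eq_zero_iff _).2 rfl
      rw [hPen i i'] at hz
      have hspos : 0 < Real.sqrt (sep (g1 i) (g1 i') / n1) :=
        Real.sqrt_pos.2 (div_pos (hsep_pos _ _ hgne) hn1R)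
      linarith
  -- conclusion
  have hmis_le : Mis k1 Xt P ≤ (Set.ncard {i | gX i ≠ (σ ∘ g1) i} : ℝ) / n1 := by
    unfold Mis
    refine csInf_le ⟨0, ?_⟩ ⟨gX, σ ∘ g1, hlabX, hlabP, rfl⟩
    rintro v ⟨g, g', -, -, rfl⟩
    positivity
  have hsubU : {i | gX i ≠ (σ ∘ g1) i} ⊆ ↑(Finset.univ.biUnion Sc) := by
    intro i hi
    simp only [Set.mem_setOf_eq, Function.comp_apply] at hi
    have hge : τ (g1 i) ≤ err i := by
      by_contra hlt
      push_neg at hlt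
      exact hi (hgood i hlt)
    refine Finset.mem_coe.2 (Finset.mem_biUnion.2 ⟨g1 i, Finset.mem_univ _, ?_⟩)
    simp only [hScdef, Finset.mem_filter, Finset.mem_univ, true_and]
    first
      | exact hge
      | exact ⟨rfl, hge⟩
  have hN : (Set.ncard {i | gX i ≠ (σ ∘ g1) i} : ℝ) ≤ ∑ c, ((Sc c).card : ℝ) := by
    have h1 := Set.ncard_le_ncard hsubU (Finset.finite_toSet _)
    rw [Set.ncard_coe_finset] at h1
    have h2 := Finset.card_biUnion_le (s := (Finset.univ : Finset (Fin k1))) (t := Sc)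
    have h3 := le_trans h1 h2
    exact_mod_cast h3
  refine le_trans hmis_le ?_
  rw [div_le_div_iff₀ hn1R hBpos]
  have hstep : (∑ c, ((Sc c).card : ℝ)) * PsiBarSq Ψ π2
      ≤ 4 * n1 * (8 * (1 + κ) ^ 2 * k * t ^ 2) := by
    have h1 : ∀ c, ((Sc c).card : ℝ) * (PsiBarSq Ψ π2 / (4 * n1)) ≤ ((Sc c).card : ℝ) * τ c := by
      intro c
      refine mul_le_mul_of_nonneg_left ?_ (Nat.cast_nonneg _)
      simp only [hτdef]
      gcongr
      exact hB_le_dsq c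
    have h2 : (∑ c, ((Sc c).card : ℝ)) * (PsiBarSq Ψ π2 / (4 * n1))
        ≤ 8 * (1 + κ) ^ 2 * k * t ^ 2 := by
      rw [Finset.sum_mul]
      exact le_trans (Finset.sum_le_sum fun c _ => h1 c) htotal
    have h3 := mul_le_mul_of_nonneg_left h2 (by positivity : (0:ℝ) ≤ 4 * n1)
    calc (∑ c, ((Sc c).card : ℝ)) * PsiBarSq Ψ π2
        = 4 * n1 * ((∑ c, ((Sc c).card : ℝ)) * (PsiBarSq Ψ π2 / (4 * n1))) := by
          rw [mul_div_assoc', mul_div_assoc', mul_div_cancel_left₀ _ (by positivity : (4 * (n1:ℝ)) ≠ 0)]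
      _ ≤ 4 * n1 * (8 * (1 + κ) ^ 2 * k * t ^ 2) := h3
  calc (Set.ncard {i | gX i ≠ (σ ∘ g1) i} : ℝ) * PsiBarSq Ψ π2
      ≤ (∑ c, ((Sc c).card : ℝ)) * PsiBarSq Ψ π2 :=
        mul_le_mul_of_nonneg_right hN hBpos.le
    _ ≤ 4 * n1 * (8 * (1 + κ) ^ 2 * k * t ^ 2) := hstep
    _ = 32 * (1 + κ) ^ 2 * k * t ^ 2 * n1 := by ring

end
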